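/- For l ∈ ℝ⁶ with coordinates l_ij indexed by two-element subsets {i,j} of {1,2,3,4} (with l_ji = l_ij), define for {i,j,k,h} = {1,2,3,4} the dihedral angle α_ij(l) to be the inner angle of the generalized Euclidean triangle of edge lengths e^{(l_ij+l_kh)/2}, e^{(l_ik+l_jh)/2}, e^{(l_ih+l_jk)/2} opposite the edge of length e^{(l_ij+l_kh)/2}. Then each function α_ij : ℝ⁶ → [0, π] is continuous, and the volume function vol(l) = (1/2) Σ_{i<j} Λ(α_ij(l)) is continuous and nonnegative on all of ℝ⁶. -/

import Mathlib

/-- The Lobachevsky function `Λ(t) = -∫₀ᵗ log |2 sin s| ds`. -/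
noncomputable def Lob (t : ℝ) : ℝ := -∫ s in (0 : ℝ)..t, Real.log |2 * Real.sin s|

/-- The inner angle, opposite the edge of length `x i`, of the generalized Euclidean
triangle of edge lengths `x 0, x 1, x 2` (clamped arccos convention). -/
noncomputable def ang (i : Fin 3) (x : Fin 3 → ℝ) : ℝ :=
  Real.arccos (((x (i + 1)) ^ 2 + (x (i + 2)) ^ 2 - (x i) ^ 2) / (2 * x (i + 1) * x (i + 2)))

/- We index the six edges of a tetrahedron on vertices `{1,2,3,4}` by `Fin 6`, in the
order `l₁₂, l₁₃, l₁₄, l₂₃, l₂₄, l₃₄`; the edge opposite to edge `m` is edge `5 - m`,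
so the three quads (pairs of opposite edges) are `(0,5), (1,4), (2,3)`. -/

/-- Half the sum of the lengths of the two opposite edges in the `m`-th quad. -/
noncomputable def quadLen (l : Fin 6 → ℝ) (m : Fin 3) : ℝ :=
  (l ⟨m.val, by have := m.isLt; omega⟩ + l ⟨5 - m.val, by have := m.isLt; omega⟩) / 2

/-- The quad containing the `m`-th edge. -/
def quadOf (m : Fin 6) : Fin 3 := ⟨min m.val (5 - m.val), by have := m.isLt; omega⟩

/-- The dihedral angle of the generalized decorated tetrahedron of edge lengths `l`
at the `m`-th edge: the inner angle of the generalized Euclidean triangle of edge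
lengths `exp (quadLen l 0), exp (quadLen l 1), exp (quadLen l 2)` opposite the edge
coming from the quad containing `m`. -/
noncomputable def dihed (m : Fin 6) (l : Fin 6 → ℝ) : ℝ :=
  ang (quadOf m) (fun i => Real.exp (quadLen l i))

/-- The volume of the generalized decorated tetrahedron of edge lengths `l`. -/
noncomputable def tvol (l : Fin 6 → ℝ) : ℝ := (1 / 2) * ∑ m : Fin 6, Lob (dihed m l)

open Real MeasureTheory intervalIntegral Set

noncomputable def lg (s : ℝ) : ℝ := Real.log |2 * Real.sin s|

lemma lg_periodic : Function.Periodic lg π := fun s => by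
  simp [lg, Real.sin_add, abs_mul]

lemma lg_refl (s : ℝ) : lg (π - s) = lg s := by simp [lg, Real.sin_pi_sub]

lemma lg_meas : Measurable lg :=
  Real.measurable_log.comp ((continuous_abs.comp (continuous_const.mul Real.continuous_sin)).measurable)

lemma integrableOn_log_Ioc : IntegrableOn Real.log (Set.Ioc 0 (π/2)) := by
  have h1 : IntegrableOn (fun x : ℝ => -Real.log x) (Set.Ioc 0 1) := by
    apply integrableOn_deriv_of_nonneg (g := fun x : ℝ => x - x * Real.log x)
    · exact (continuous_id.sub Real.continuous_mul_log).continuousOn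
    · intro x hx
      have := (Real.hasDerivAt_mul_log (ne_of_gt hx.1)).const_sub 0 |>.neg
      have h := ((hasDerivAt_id x).sub (Real.hasDerivAt_mul_log (ne_of_gt hx.1)))
      exact h.congr_deriv (by ring)
    · intro x hx
      simp only [neg_nonneg]
      exact Real.log_nonpos hx.1.le hx.2.le
  have h1' : IntegrableOn Real.log (Set.Ioc 0 1) := by
    have h := h1.neg
    rw [show (-fun x : ℝ => -Real.log x) = Real.log from by funext x; simp] at h
    exact h
  have h2 : IntegrableOn Real.log (Set.Ioc 1 (π/2)) := by
    apply (ContinuousOn.integrableOn_Icc ?_).mono_set Set.Ioc_subset_Icc_self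
    exact Real.continuousOn_log.mono (by intro x hx; simp; intro h; rw [h] at hx; simp at hx; linarith [hx.1])
  have : Set.Ioc (0:ℝ) (π/2) ⊆ Set.Ioc 0 1 ∪ Set.Ioc 1 (π/2) := by
    rw [Set.Ioc_union_Ioc_eq_Ioc (by norm_num) (by nlinarith [Real.pi_gt_three])]
  exact (h1'.union h2).mono_set this

lemma lg_int_half : IntegrableOn lg (Set.Ioc 0 (π/2)) := by
  have hmaj : IntegrableOn (fun s : ℝ => |Real.log s| + 2) (Set.Ioc 0 (π/2)) :=
    integrableOn_log_Ioc.abs.add (integrableOn_const (by simp [Real.pi_pos.le]))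
  apply Integrable.mono' hmaj lg_meas.aestronglyMeasurable
  rw [ae_restrict_iff' measurableSet_Ioc]
  refine Filter.Eventually.of_forall fun s hs => ?_
  obtain ⟨hs0, hs1⟩ := hs
  have hsin : 0 < Real.sin s := Real.sin_pos_of_pos_of_lt_pi hs0 (by linarith [Real.pi_pos])
  have habs : |2 * Real.sin s| = 2 * Real.sin s := abs_of_pos (by linarith)
  have hup : Real.log (2 * Real.sin s) ≤ 2 := by
    calc Real.log (2 * Real.sin s) ≤ 2 * Real.sin s - 1 := Real.log_le_sub_one_of_pos (by linarith)
    _ ≤ 2 := by nlinarith [Real.sin_le_one s]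
  have hlow : Real.log s ≤ Real.log (2 * Real.sin s) := by
    apply Real.log_le_log hs0
    have hms := Real.mul_le_sin hs0.le hs1
    rw [div_mul_eq_mul_div, div_le_iff₀ Real.pi_pos] at hms
    nlinarith [Real.pi_le_four]
  rw [Real.norm_eq_abs, lg, habs, abs_le]
  constructor
  · have : -|Real.log s| ≤ Real.log s := neg_abs_le _
    linarith
  · linarith [abs_nonneg (Real.log s)]

lemma lg_ii : ∀ a b : ℝ, IntervalIntegrable lg volume a b := by
  have base0 : IntervalIntegrable lg volume 0 (π/2) :=
    (intervalIntegrable_iff_integrableOn_Ioc_of_le (by positivity)).2 lg_int_half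
  have base1 : IntervalIntegrable lg volume (π/2) π := by
    have h := (base0.comp_sub_left π).symm
    have he : (fun x => lg (π - x)) = lg := funext lg_refl
    rw [he, show π - π/2 = π/2 by ring, sub_zero] at h
    exact h
  have base : IntervalIntegrable lg volume 0 π := base0.trans base1
  have big : ∀ n : ℕ, IntervalIntegrable lg volume (-(n*π)) (n*π) := by
    intro n
    induction n with
    | zero => simp
    | succ n ih =>
      have hr : IntervalIntegrable lg volume (n*π) ((n+1)*π) := by
        have h := base.comp_sub_right (n*π)
        have he : (fun x => lg (x - n*π)) = lg := funext fun x => (lg_periodic.nat_mul n).sub_eq x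
        rw [he] at h
        have : (0 : ℝ) + n*π = n*π := by ring
        rw [this] at h
        have : (π : ℝ) + n*π = (n+1)*π := by ring
        rwa [this] at h
      have hl : IntervalIntegrable lg volume (-((n+1)*π)) (-(n*π)) := by
        have h := base.comp_add_right ((n+1)*π)
        have he : (fun x => lg (x + (n+1)*π)) = lg := by
          funext x
          have := (lg_periodic.nat_mul (n+1)) x
          push_cast at this ⊢
          exact this
        rw [he] at h
        have e1 : (0:ℝ) - (n+1)*π = -((n+1)*π) := by ring
        have e2 : (π:ℝ) - (n+1)*π = -(n*π) := by ring
        rw [e1, e2] at h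
        exact h
      have := (hl.trans ih).trans hr
      push_cast
      push_cast at this
      convert this using 2 <;> ring
  intro a b
  obtain ⟨n, hn⟩ := exists_nat_ge (max |a| |b| / π)
  have hπ := Real.pi_pos
  have hn' : max |a| |b| ≤ n * π := by
    rw [div_le_iff₀ hπ] at hn; linarith
  apply (big n).mono_set
  rw [Set.uIcc_of_le (by nlinarith [abs_nonneg a, le_max_left |a| |b|] : -(n*π:ℝ) ≤ n*π)]
  apply Set.uIcc_subset_Icc <;> rw [Set.mem_Icc] <;>
    constructor <;> [skip; skip; skip; skip] <;>
    first
      | linarith [neg_abs_le a, le_max_left |a| |b|]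
      | linarith [le_abs_self a, le_max_left |a| |b|]
      | linarith [neg_abs_le b, le_max_right |a| |b|]
      | linarith [le_abs_self b, le_max_right |a| |b|]
lemma Lob_cont' : Continuous fun t => -∫ s in (0:ℝ)..t, lg s :=
  (intervalIntegral.continuous_primitive lg_ii 0).neg

lemma Lob_cont : Continuous Lob := Lob_cont'

lemma I_pi : (∫ s in (0:ℝ)..π, lg s) = 0 := by
  have hhalf : (∫ s in (0:ℝ)..π/2, lg s) = ∫ s in (π/2:ℝ)..π, lg s := by
    have h := intervalIntegral.integral_comp_sub_left (a := (0:ℝ)) (b := π/2) (fun s => lg s) π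
    simp only [lg_refl] at h
    rw [show π - π/2 = π/2 by ring, sub_zero] at h
    exact h
  have hsplit : (∫ s in (0:ℝ)..π/2, lg s) + ∫ s in (π/2:ℝ)..π, lg s = ∫ s in (0:ℝ)..π, lg s :=
    intervalIntegral.integral_add_adjacent_intervals (lg_ii _ _) (lg_ii _ _)
  have hdouble : (∫ s in (0:ℝ)..π/2, lg (2*s)) = 2⁻¹ * ∫ s in (0:ℝ)..π, lg s := by
    have h := intervalIntegral.integral_comp_mul_left (a := (0:ℝ)) (b := π/2) (fun s => lg s)
      (c := 2) two_ne_zero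
    rw [show (2:ℝ) * (π/2) = π by ring, mul_zero, smul_eq_mul] at h
    exact h
  have hcos : (∫ s in (0:ℝ)..π/2, lg (π/2 - s)) = ∫ s in (0:ℝ)..π/2, lg s := by
    have h := intervalIntegral.integral_comp_sub_left (a := (0:ℝ)) (b := π/2) (fun s => lg s) (π/2)
    rw [sub_self, sub_zero] at h
    exact h
  have hcc : IntervalIntegrable (fun s => lg (π/2 - s)) volume 0 (π/2) := by
    have h := ((lg_ii 0 (π/2)).comp_sub_left (π/2)).symm
    rw [sub_self, sub_zero] at h
    exact h
  have hne : ∀ᵐ x : ℝ, x ≠ π/2 := by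
    rw [MeasureTheory.ae_iff]
    simp only [ne_eq, not_not, Set.setOf_eq_eq_singleton]
    exact Real.volume_singleton
  have hae : (∫ s in (0:ℝ)..π/2, lg (2*s)) = ∫ s in (0:ℝ)..π/2, (lg s + lg (π/2 - s)) := by
    apply intervalIntegral.integral_congr_ae
    filter_upwards [hne] with s hs hmem
    rw [Set.uIoc_of_le (by positivity : (0:ℝ) ≤ π/2)] at hmem
    have hs1 : 0 < s := hmem.1
    have hs2 : s < π/2 := lt_of_le_of_ne hmem.2 hs
    have hsin : 0 < Real.sin s := Real.sin_pos_of_pos_of_lt_pi hs1 (by linarith [Real.pi_pos])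
    have hcosp : 0 < Real.cos s := Real.cos_pos_of_mem_Ioo ⟨by linarith [Real.pi_pos], hs2⟩
    simp only [lg, Real.sin_pi_div_two_sub, Real.sin_two_mul]
    rw [abs_of_pos (by positivity), abs_of_pos (by positivity), abs_of_pos (by positivity),
      ← Real.log_mul (by positivity) (by positivity)]
    congr 1
    ring
  have hadd : (∫ s in (0:ℝ)..π/2, (lg s + lg (π/2 - s)))
      = (∫ s in (0:ℝ)..π/2, lg s) + ∫ s in (0:ℝ)..π/2, lg (π/2 - s) :=
    intervalIntegral.integral_add (lg_ii _ _) hcc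
  linarith

lemma Lob_pi_sub (x : ℝ) : Lob (π - x) = - Lob x := by
  rw [Lob, Lob]
  have h2 : (∫ s in (0:ℝ)..x, Real.log |2 * Real.sin s|) = ∫ s in (π-x)..π, lg s := by
    have h := intervalIntegral.integral_comp_sub_left (a := (0:ℝ)) (b := x) (fun s => lg s) π
    simp only [lg_refl] at h
    rw [sub_zero] at h
    exact h
  have h1 : (∫ s in (0:ℝ)..(π-x), lg s) + ∫ s in (π-x)..π, lg s = ∫ s in (0:ℝ)..π, lg s :=
    intervalIntegral.integral_add_adjacent_intervals (lg_ii _ _) (lg_ii _ _)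
  have h3 : (∫ s in (0:ℝ)..(π-x), Real.log |2 * Real.sin s|) = ∫ s in (0:ℝ)..(π-x), lg s := rfl
  rw [h2, h3]
  linarith [I_pi]

lemma key (a b : ℝ) (ha : 0 ≤ a) (hb : 0 ≤ b) (hab : a + 2*b ≤ π) :
    0 ≤ Lob a + Lob b + Lob (π - a - b) := by
  have hπ := Real.pi_pos
  rw [show π - a - b = π - (a+b) by ring, Lob_pi_sub]
  have hsplit : (∫ s in (0:ℝ)..a, lg s) + ∫ s in a..(a+b), lg s = ∫ s in (0:ℝ)..(a+b), lg s :=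
    intervalIntegral.integral_add_adjacent_intervals (lg_ii _ _) (lg_ii _ _)
  have hshift : (∫ s in a..(a+b), lg s) = ∫ s in (0:ℝ)..b, lg (s + a) := by
    have h := intervalIntegral.integral_comp_add_right (a := (0:ℝ)) (b := b) (fun s => lg s) a
    rw [zero_add, add_comm b a] at h
    exact h.symm
  have hii : IntervalIntegrable (fun s => lg (s + a)) volume 0 b := by
    have h := (lg_ii a (a+b)).comp_add_right a
    rw [sub_self, show a + b - a = b by ring] at h
    exact h
  have hmono : (∫ s in (0:ℝ)..b, lg s) ≤ ∫ s in (0:ℝ)..b, lg (s + a) := by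
    apply intervalIntegral.integral_mono_ae_restrict hb (lg_ii _ _) hii
    have hne : ∀ᵐ x : ℝ, x ≠ 0 := by
      rw [MeasureTheory.ae_iff]
      simp only [ne_eq, not_not, Set.setOf_eq_eq_singleton]
      exact Real.volume_singleton
    filter_upwards [MeasureTheory.ae_restrict_mem measurableSet_Icc,
      MeasureTheory.ae_restrict_of_ae hne] with s hs hs0
    have hs1 : 0 < s := lt_of_le_of_ne hs.1 (Ne.symm hs0)
    have hs2 : s ≤ b := hs.2
    have hsin1 : 0 < Real.sin s := Real.sin_pos_of_pos_of_lt_pi hs1 (by linarith)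
    have hsinle : Real.sin s ≤ Real.sin (s + a) := by
      have hd := Real.sin_sub_sin (s + a) s
      have e1 : ((s + a) - s) / 2 = a / 2 := by ring
      have e2 : ((s + a) + s) / 2 = s + a/2 := by ring
      rw [e1, e2] at hd
      have hsa : 0 ≤ Real.sin (a/2) :=
        Real.sin_nonneg_of_nonneg_of_le_pi (by linarith) (by linarith)
      have hca : 0 ≤ Real.cos (s + a/2) :=
        Real.cos_nonneg_of_mem_Icc ⟨by linarith, by linarith⟩
      nlinarith
    simp only [lg]
    rw [abs_of_pos (by positivity), abs_of_pos (by nlinarith)]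
    exact Real.log_le_log (by positivity) (by linarith)
  rw [Lob, Lob, Lob]
  have e0 : ∀ t : ℝ, (∫ s in (0:ℝ)..t, Real.log |2 * Real.sin s|) = ∫ s in (0:ℝ)..t, lg s :=
    fun t => rfl
  rw [e0, e0, e0]
  linarith [hsplit, hshift, hmono]

lemma tri (a b c : ℝ) (ha : 0 ≤ a) (hb : 0 ≤ b) (hc : 0 ≤ c) (hsum : a + b + c = π) :
    0 ≤ Lob a + Lob b + Lob c := by
  rcases le_total b c with h | h
  · have hk := key a b ha hb (by linarith)
    rw [show π - a - b = c by linarith] at hk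
    linarith
  · have hk := key a c ha hc (by linarith)
    rw [show π - a - c = b by linarith] at hk
    linarith
lemma arccos_tri {a b c : ℝ} (ha : 0 < a) (hb : 0 < b) (hc : 0 < c) :
    Real.arccos ((b^2+c^2-a^2)/(2*b*c)) + Real.arccos ((c^2+a^2-b^2)/(2*c*a))
      + Real.arccos ((a^2+b^2-c^2)/(2*a*b)) = π := by
  by_cases h1 : b + c ≤ a
  · have e0 : Real.arccos ((b^2+c^2-a^2)/(2*b*c)) = π := by
      rw [Real.arccos_eq_pi, div_le_iff₀ (by positivity)]
      nlinarith
    have e1 : Real.arccos ((c^2+a^2-b^2)/(2*c*a)) = 0 := by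
      rw [Real.arccos_eq_zero, le_div_iff₀ (by positivity)]
      nlinarith
    have e2 : Real.arccos ((a^2+b^2-c^2)/(2*a*b)) = 0 := by
      rw [Real.arccos_eq_zero, le_div_iff₀ (by positivity)]
      nlinarith
    rw [e0, e1, e2]; ring
  by_cases h2 : c + a ≤ b
  · have e0 : Real.arccos ((b^2+c^2-a^2)/(2*b*c)) = 0 := by
      rw [Real.arccos_eq_zero, le_div_iff₀ (by positivity)]
      nlinarith
    have e1 : Real.arccos ((c^2+a^2-b^2)/(2*c*a)) = π := by
      rw [Real.arccos_eq_pi, div_le_iff₀ (by positivity)]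
      nlinarith
    have e2 : Real.arccos ((a^2+b^2-c^2)/(2*a*b)) = 0 := by
      rw [Real.arccos_eq_zero, le_div_iff₀ (by positivity)]
      nlinarith
    rw [e0, e1, e2]; ring
  by_cases h3 : a + b ≤ c
  · have e0 : Real.arccos ((b^2+c^2-a^2)/(2*b*c)) = 0 := by
      rw [Real.arccos_eq_zero, le_div_iff₀ (by positivity)]
      nlinarith
    have e1 : Real.arccos ((c^2+a^2-b^2)/(2*c*a)) = 0 := by
      rw [Real.arccos_eq_zero, le_div_iff₀ (by positivity)]
      nlinarith
    have e2 : Real.arccos ((a^2+b^2-c^2)/(2*a*b)) = π := by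
      rw [Real.arccos_eq_pi, div_le_iff₀ (by positivity)]
      nlinarith
    rw [e0, e1, e2]; ring
  push_neg at h1 h2 h3
  set c0 : ℝ := (b^2+c^2-a^2)/(2*b*c) with hc0def
  set c1 : ℝ := (c^2+a^2-b^2)/(2*c*a) with hc1def
  set c2 : ℝ := (a^2+b^2-c^2)/(2*a*b) with hc2def
  have hc0u : c0 ≤ 1 := by rw [hc0def, div_le_one (by positivity)]; nlinarith
  have hc0l : -1 ≤ c0 := by rw [hc0def, le_div_iff₀ (by positivity)]; nlinarith
  have hc1u : c1 ≤ 1 := by rw [hc1def, div_le_one (by positivity)]; nlinarith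
  have hc1l : -1 ≤ c1 := by rw [hc1def, le_div_iff₀ (by positivity)]; nlinarith
  have hc2u : c2 ≤ 1 := by rw [hc2def, div_le_one (by positivity)]; nlinarith
  have hc2l : -1 ≤ c2 := by rw [hc2def, le_div_iff₀ (by positivity)]; nlinarith
  set H : ℝ := 2*(a^2*b^2+b^2*c^2+c^2*a^2) - a^4 - b^4 - c^4 with hHdef
  have hH : 0 ≤ H := by
    have : H = (a+b+c)*((b+c-a)*((c+a-b)*(a+b-c))) := by rw [hHdef]; ring
    rw [this]
    exact le_of_lt (mul_pos (by linarith) (mul_pos (by linarith) (mul_pos (by linarith) (by linarith))))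
  have hprod : Real.sqrt (1 - c0^2) * Real.sqrt (1 - c1^2) = H / (4*a*b*c^2) := by
    rw [← Real.sqrt_mul (by nlinarith : (0:ℝ) ≤ 1 - c0^2)]
    rw [show (1 - c0^2) * (1 - c1^2) = (H / (4*a*b*c^2))^2 from by
      rw [hc0def, hc1def, hHdef]; field_simp; ring]
    exact Real.sqrt_sq (by positivity)
  set A := Real.arccos c0 with hA
  set B := Real.arccos c1 with hB
  have hsum01 : 0 ≤ c0 + c1 := by
    have e : c0 + c1 = (a+b)*((c+a-b)*(c-a+b))/(2*a*b*c) := by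
      rw [hc0def, hc1def]; field_simp; ring
    rw [e]
    exact le_of_lt (div_pos (mul_pos (by linarith) (mul_pos (by linarith) (by linarith))) (by positivity))
  have hABle : A + B ≤ π := by
    rw [hA, hB, Real.arccos_eq_pi_div_two_sub_arcsin, Real.arccos_eq_pi_div_two_sub_arcsin]
    have h := Real.monotone_arcsin (by linarith : -c1 ≤ c0)
    rw [Real.arcsin_neg] at h
    linarith
  have hA0 : 0 ≤ A := Real.arccos_nonneg _
  have hB0 : 0 ≤ B := Real.arccos_nonneg _
  have hcos : Real.cos (π - (A + B)) = c2 := by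
    rw [Real.cos_pi_sub, Real.cos_add, hA, hB, Real.cos_arccos hc0l hc0u,
      Real.cos_arccos hc1l hc1u, Real.sin_arccos, Real.sin_arccos, hprod]
    rw [hc0def, hc1def, hc2def, hHdef]
    field_simp
    ring
  have hlast : Real.arccos c2 = π - (A + B) := by
    rw [← hcos, Real.arccos_cos (by linarith) (by linarith)]
  rw [hlast]
  ring

lemma ang_sum (x : Fin 3 → ℝ) (hx : ∀ i, 0 < x i) :
    ang 0 x + ang 1 x + ang 2 x = π := by
  have e0 : ang 0 x = Real.arccos (((x 1)^2 + (x 2)^2 - (x 0)^2)/(2 * x 1 * x 2)) := rfl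
  have e1 : ang 1 x = Real.arccos (((x 2)^2 + (x 0)^2 - (x 1)^2)/(2 * x 2 * x 0)) := rfl
  have e2 : ang 2 x = Real.arccos (((x 0)^2 + (x 1)^2 - (x 2)^2)/(2 * x 0 * x 1)) := rfl
  rw [e0, e1, e2]
  exact arccos_tri (hx 0) (hx 1) (hx 2)

lemma dihed_cont (m : Fin 6) : Continuous (dihed m) := by
  unfold dihed ang
  apply Real.continuous_arccos.comp
  have hq : ∀ j : Fin 3, Continuous fun l : Fin 6 → ℝ => Real.exp (quadLen l j) := by
    intro j
    unfold quadLen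
    fun_prop
  apply Continuous.div
  · exact (((hq _).pow 2).add ((hq _).pow 2)).sub ((hq _).pow 2)
  · exact (continuous_const.mul (hq _)).mul (hq _)
  · intro l
    have := Real.exp_pos (quadLen l (quadOf m + 1))
    have := Real.exp_pos (quadLen l (quadOf m + 2))
    positivity

lemma dihed_mem (m : Fin 6) (l : Fin 6 → ℝ) : dihed m l ∈ Set.Icc 0 π :=
  ⟨Real.arccos_nonneg _, Real.arccos_le_pi _⟩

lemma tvol_eq (l : Fin 6 → ℝ) :
    tvol l = Lob (ang 0 (fun i => Real.exp (quadLen l i)))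
      + Lob (ang 1 (fun i => Real.exp (quadLen l i)))
      + Lob (ang 2 (fun i => Real.exp (quadLen l i))) := by
  have h0 : dihed 0 l = ang 0 (fun i => Real.exp (quadLen l i)) := rfl
  have h5 : dihed 5 l = ang 0 (fun i => Real.exp (quadLen l i)) := rfl
  have h1 : dihed 1 l = ang 1 (fun i => Real.exp (quadLen l i)) := rfl
  have h4 : dihed 4 l = ang 1 (fun i => Real.exp (quadLen l i)) := rfl
  have h2 : dihed 2 l = ang 2 (fun i => Real.exp (quadLen l i)) := rfl
  have h3 : dihed 3 l = ang 2 (fun i => Real.exp (quadLen l i)) := rfl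
  rw [tvol, Fin.sum_univ_six, h0, h1, h2, h3, h4, h5]
  ring

theorem stmt4 :
    (∀ m : Fin 6, Continuous (dihed m) ∧ ∀ l : Fin 6 → ℝ, dihed m l ∈ Set.Icc 0 Real.pi) ∧
    Continuous tvol ∧ ∀ l : Fin 6 → ℝ, 0 ≤ tvol l := by
  refine ⟨fun m => ⟨dihed_cont m, fun l => dihed_mem m l⟩, ?_, ?_⟩
  · have : Continuous fun l : Fin 6 → ℝ => ∑ m : Fin 6, Lob (dihed m l) := by
      apply continuous_finset_sum
      intro m _
      exact Lob_cont.comp (dihed_cont m)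
    exact continuous_const.mul this
  · intro l
    rw [tvol_eq]
    exact tri _ _ _ (Real.arccos_nonneg _) (Real.arccos_nonneg _) (Real.arccos_nonneg _)
      (ang_sum _ (fun i => Real.exp_pos _))
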